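/- Let Γ = (V,E,s,t) be a finite connected multigraph, 𝓔 ⊆ E a nondisconnecting subset, and φ an acyclic flow on the subdivision Γ^𝓔 such that div φ takes value −1 at every exceptional vertex. Set 𝓕 := {e ∈ E∖𝓔 : φ(e) ≠ 0}. Then the dimension of the ℝ-linear span of K_{Γ,𝓔,φ} equals |E| − |𝓕| + b₀(Γ_{𝓔∪𝓕}) − 1, where b₀(Γ_{𝓔∪𝓕}) is the number of connected components of the graph (V, E∖(𝓔∪𝓕)). Moreover, dim K_{Γ,𝓔,φ} = 0 if and only if |V| = 1 and E = ∅; and dim K_{Γ,𝓔,φ} = 1 if and only if 𝓔 = ∅ and one of the following holds: (1) |V| = 2, Γ has no loops (s e ≠ t e for all e), and φ is not identically 0; (2) |V| = 2, Γ has no loops, |E| = 1 and φ = 0; (3) |V| = |E| = 1. -/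

import Mathlib

noncomputable section

/-- The "step" relation of a multigraph `(V, E, s, t)`. -/
def GraphStep {V E : Type} (s t : E → V) (a b : V) : Prop := ∃ e, s e = a ∧ t e = b

/-- `b₀`: the number of connected components. -/
def b0 {V E : Type} (s t : E → V) : ℕ := Nat.card (Quot (GraphStep s t))

/-- A multigraph is connected. -/
def GraphConnected {V E : Type} (s t : E → V) : Prop := Nonempty V ∧ b0 s t = 1

/-- Vertex type of the subdivision `Γ^𝓔`. -/
abbrev SubV (V : Type) {E : Type} (𝓔 : Finset E) : Type := V ⊕ {e // e ∈ 𝓔}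

/-- Edge type of the subdivision `Γ^𝓔`. -/
abbrev SubE {E : Type} (𝓔 : Finset E) : Type := {e // e ∉ 𝓔} ⊕ ({e // e ∈ 𝓔} × Bool)

/-- Source map of the subdivision. -/
def subS {V E : Type} (s t : E → V) (𝓔 : Finset E) : SubE 𝓔 → SubV V 𝓔
  | .inl e => .inl (s e.1)
  | .inr (e, false) => .inl (s e.1)
  | .inr (e, true) => .inr e

/-- Target map of the subdivision. -/
def subT {V E : Type} (s t : E → V) (𝓔 : Finset E) : SubE 𝓔 → SubV V 𝓔
  | .inl e => .inl (t e.1)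
  | .inr (e, false) => .inr e
  | .inr (e, true) => .inl (t e.1)

/-- The divisor of a flow `φ : E → ℕ`. -/
def divFlow {V E : Type} (s t : E → V) (φ : E → ℕ) (v : V) : ℤ :=
  (∑ᶠ e ∈ {e : E | t e = v}, (φ e : ℤ)) - ∑ᶠ e ∈ {e : E | s e = v}, (φ e : ℤ)

/-- A flow is acyclic if the digraph obtained by contracting all edges of flow `0`
has no directed cycles. -/
def FlowAcyclic {V E : Type} (s t : E → V) (φ : E → ℕ) : Prop :=
  ¬ ∃ a : E, φ a ≠ 0 ∧
    Relation.ReflTransGen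
      (fun v w => (∃ b, φ b ≠ 0 ∧ s b = v ∧ t b = w) ∨
        (∃ b, φ b = 0 ∧ ((s b = v ∧ t b = w) ∨ (s b = w ∧ t b = v)))) (t a) (s a)

/-- The boundary map `d*` with real coefficients. -/
def dstarR {V E : Type} (s t : E → V) (z : E → ℝ) (v : V) : ℝ :=
  (∑ᶠ e ∈ {e : E | t e = v}, z e) - ∑ᶠ e ∈ {e : E | s e = v}, z e

/-- The cone `C_{Γ,𝓔,φ}` (stated for an arbitrary graph; it is applied to `Γ^𝓔`):
nonnegative vectors orthogonal to `(z a · φ a)_a` for every `1`-cycle `z`. -/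
def Ccone {V E : Type} (s t : E → V) (φ : E → ℕ) : Set (E → ℝ) :=
  {x | (∀ a, 0 ≤ x a) ∧
    ∀ z : E → ℝ, (∀ v, dstarR s t z v = 0) → (∑ᶠ a, z a * (φ a : ℝ) * x a) = 0}

/-- The linear map `F : ℝ^{E(Γ^𝓔)} → ℝ^{E(Γ)}` adding the lengths of the two halves
of each subdivided edge. -/
def Fmap {E : Type} [DecidableEq E] (𝓔 : Finset E) (x : SubE 𝓔 → ℝ) : E → ℝ :=
  fun e => if h : e ∈ 𝓔 then x (Sum.inr (⟨e, h⟩, false)) + x (Sum.inr (⟨e, h⟩, true))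
    else x (Sum.inl ⟨e, h⟩)

/-- The cone `K_{Γ,𝓔,φ} = F(C_{Γ,𝓔,φ})`. -/
def Kcone {V E : Type} [DecidableEq E] (s t : E → V) (𝓔 : Finset E)
    (φ : SubE 𝓔 → ℕ) : Set (E → ℝ) :=
  Fmap 𝓔 '' Ccone (subS s t 𝓔) (subT s t 𝓔) φ



open Classical Module
set_option linter.unusedSectionVars false
set_option linter.unusedVariables false
set_option maxHeartbeats 1000000
set_option synthInstance.maxHeartbeats 400000


section Generic
variable {ι κ : Type} [Fintype ι] [Fintype κ]

lemma finsum_eq_ite (g : κ → ι) (z : κ → ℝ) (v : ι) :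
    ∑ᶠ e ∈ {e : κ | g e = v}, z e = ∑ a, if g a = v then z a else 0 := by
  have h1 : {e : κ | g e = v} = ↑(Finset.univ.filter fun e => g e = v) := by
    ext e; simp
  rw [h1, finsum_mem_coe_finset, Finset.sum_filter]

lemma stokes (s t : κ → ι) (z : κ → ℝ) (f : ι → ℝ) :
    ∑ v, f v * dstarR s t z v = ∑ a, z a * (f (t a) - f (s a)) := by
  unfold dstarR
  simp only [finsum_eq_ite, mul_sub, Finset.mul_sum, Finset.sum_sub_distrib, mul_ite, mul_zero]
  rw [Finset.sum_comm (f := fun v a => if t a = v then f v * z a else 0),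
    Finset.sum_comm (f := fun v a => if s a = v then f v * z a else 0)]
  congr 1 <;> refine Finset.sum_congr rfl fun a _ => ?_ <;>
    rw [Finset.sum_ite_eq] <;> simp [mul_comm]

lemma dstarR_eq_sum (s t : κ → ι) (z : κ → ℝ) (v : ι) :
    dstarR s t z v = ∑ a, z a * ((if t a = v then (1:ℝ) else 0) - (if s a = v then 1 else 0)) := by
  have := stokes s t z (fun u => if u = v then (1:ℝ) else 0)
  simp only [ite_mul, one_mul, zero_mul, Finset.sum_ite_eq', Finset.mem_univ, if_true] at this
  rw [← this]

lemma mem_range_of_orth {α : Type} {D : (α → ℝ) →ₗ[ℝ] (ι → ℝ)} {y : ι → ℝ}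
    (h : ∀ z : ι → ℝ, (∀ f, ∑ a, z a * D f a = 0) → ∑ a, z a * y a = 0) :
    y ∈ LinearMap.range D := by
  set e := (WithLp.linearEquiv 2 ℝ (ι → ℝ)).symm
  set D' : (α → ℝ) →ₗ[ℝ] EuclideanSpace ℝ ι := e.toLinearMap ∘ₗ D with hD'
  set U := LinearMap.range D'
  have key : ∀ x w : EuclideanSpace ℝ ι, (inner ℝ x w : ℝ) = ∑ a, x a * w a := by
    intro x w
    simp [PiLp.inner_apply, RCLike.inner_apply, conj_trivial]
    exact Finset.sum_congr rfl fun a _ => mul_comm _ _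
  have hy : e y ∈ Uᗮᗮ := by
    rw [Submodule.mem_orthogonal]
    intro z hz
    rw [key]
    refine h z fun f => ?_
    have := (Submodule.mem_orthogonal' _ _).mp hz (D' f) ⟨f, rfl⟩
    rw [key] at this
    exact this
  rw [Submodule.orthogonal_orthogonal] at hy
  obtain ⟨f, hf⟩ := hy
  exact ⟨f, by simpa [D', e] using congrArg (fun w => (WithLp.linearEquiv 2 ℝ (ι → ℝ)) w) hf⟩

end Generic

section Generic2
variable {ι κ : Type} [Fintype ι] [Fintype κ]

/-- The coboundary map `f ↦ f∘t - f∘s`. -/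
def Dmap (s t : κ → ι) : (ι → ℝ) →ₗ[ℝ] (κ → ℝ) where
  toFun f a := f (t a) - f (s a)
  map_add' f g := by funext a; simp; ring
  map_smul' c f := by funext a; simp; ring

lemma mem_ccone_iff (s t : κ → ι) (φ : κ → ℕ) (x : κ → ℝ) :
    x ∈ Ccone s t φ ↔ (∀ a, 0 ≤ x a) ∧
      ∃ f : ι → ℝ, ∀ a, (φ a : ℝ) * x a = f (t a) - f (s a) := by
  constructor
  · rintro ⟨hx, hz⟩
    refine ⟨hx, ?_⟩
    have hy : (fun a => (φ a : ℝ) * x a) ∈ LinearMap.range (Dmap s t) := by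
      apply mem_range_of_orth
      intro z hf
      have hdz : ∀ v, dstarR s t z v = 0 := by
        intro v
        rw [dstarR_eq_sum]
        exact hf (fun u => (if u = v then (1:ℝ) else 0))
      have := hz z hdz
      rw [finsum_eq_sum_of_fintype] at this
      rw [← this]
      exact Finset.sum_congr rfl fun a _ => by ring
    obtain ⟨f, hf⟩ := hy
    exact ⟨f, fun a => by rw [← congrFun hf a]; rfl⟩
  · rintro ⟨hx, f, hf⟩
    refine ⟨hx, fun z hdz => ?_⟩
    rw [finsum_eq_sum_of_fintype]
    have : ∑ a, z a * (φ a : ℝ) * x a = ∑ a, z a * (f (t a) - f (s a)) := by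
      refine Finset.sum_congr rfl fun a _ => by rw [mul_assoc, hf a]
    rw [this, ← stokes s t z f]
    simp [hdz]

/-- Acyclic flows admit strict potentials. -/
lemma exists_potential (s t : κ → ι) (φ : κ → ℕ) (hac : FlowAcyclic s t φ) :
    ∃ f : ι → ℝ, (∀ a, φ a ≠ 0 → f (s a) < f (t a)) ∧
      (∀ a, φ a = 0 → f (s a) = f (t a)) := by
  set r : ι → ι → Prop := fun v w => (∃ b, φ b ≠ 0 ∧ s b = v ∧ t b = w) ∨
    (∃ b, φ b = 0 ∧ ((s b = v ∧ t b = w) ∨ (s b = w ∧ t b = v))) with hr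
  set R := Relation.ReflTransGen r
  set f : ι → ℝ := fun v => (Set.ncard {u | R u v} : ℝ) with hfdef
  have hmono : ∀ v w, R v w → {u | R u v} ⊆ {u | R u w} := by
    intro v w hvw u hu; exact Relation.ReflTransGen.trans hu hvw
  refine ⟨f, ?_, ?_⟩
  · intro a ha
    have h1 : R (s a) (t a) := Relation.ReflTransGen.single (Or.inl ⟨a, ha, rfl, rfl⟩)
    have h2 : ¬ R (t a) (s a) := fun hcon => hac ⟨a, ha, hcon⟩
    have hss : {u | R u (s a)} ⊂ {u | R u (t a)} := by
      refine ⟨hmono _ _ h1, fun hsub => h2 (hsub (Relation.ReflTransGen.refl))⟩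
    have h3 := Set.ncard_lt_ncard hss (Set.toFinite _)
    show (Set.ncard {u | R u (s a)} : ℝ) < (Set.ncard {u | R u (t a)} : ℝ)
    exact_mod_cast h3
  · intro a ha
    have h1 : R (s a) (t a) := Relation.ReflTransGen.single (Or.inr ⟨a, ha, Or.inl ⟨rfl, rfl⟩⟩)
    have h2 : R (t a) (s a) := Relation.ReflTransGen.single (Or.inr ⟨a, ha, Or.inr ⟨rfl, rfl⟩⟩)
    have : {u | R u (s a)} = {u | R u (t a)} :=
      Set.Subset.antisymm (hmono _ _ h1) (hmono _ _ h2)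
    rw [hfdef]; simp only [this]

/-- Functions constant along edges. -/
def constSub (s t : κ → ι) : Submodule ℝ (ι → ℝ) where
  carrier := {h | ∀ e, h (s e) = h (t e)}
  add_mem' := by intro a b ha hb e; simp [ha e, hb e]
  zero_mem' := by intro e; rfl
  smul_mem' := by intro c a ha e; simp [ha e]

lemma mem_constSub {s t : κ → ι} {h : ι → ℝ} :
    h ∈ constSub s t ↔ ∀ e, h (s e) = h (t e) := Iff.rfl

lemma finrank_constSub (s t : κ → ι) :
    Module.finrank ℝ (constSub s t) = Nat.card (Quot (GraphStep s t)) := by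
  haveI : Finite (Quot (GraphStep s t)) := Finite.of_surjective _ Quot.mk_surjective
  haveI : Fintype (Quot (GraphStep s t)) := Fintype.ofFinite _
  set Φ : (Quot (GraphStep s t) → ℝ) →ₗ[ℝ] (ι → ℝ) :=
    LinearMap.funLeft ℝ ℝ (Quot.mk (GraphStep s t)) with hΦ
  have hinj : Function.Injective Φ := LinearMap.funLeft_injective_of_surjective ℝ ℝ _
    Quot.mk_surjective
  have hrange : LinearMap.range Φ = constSub s t := by
    apply le_antisymm
    · rintro _ ⟨g, rfl⟩ e
      show g (Quot.mk _ (s e)) = g (Quot.mk _ (t e))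
      exact congrArg g (Quot.sound ⟨e, rfl, rfl⟩)
    · intro h hh
      refine ⟨Quot.lift h ?_, rfl⟩
      rintro a b ⟨e, rfl, rfl⟩
      exact hh e
  rw [← hrange, LinearMap.finrank_range_of_inj hinj, Module.finrank_pi,
    Nat.card_eq_fintype_card]

end Generic2

section Generic3
variable {ι κ : Type}

lemma b0_eq_card_of_isEmpty [IsEmpty κ] (s t : κ → ι) :
    Nat.card (Quot (GraphStep s t)) = Nat.card ι := by
  refine Nat.card_congr ⟨Quot.lift id (fun a b hab => by rcases hab with ⟨e, -⟩; exact (IsEmpty.false e).elim),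
    Quot.mk _, ?_, fun v => rfl⟩
  intro q; induction q using Quot.ind; rfl

lemma b0_congr {p q : κ → Prop} (s t : κ → ι) (h : ∀ e, p e ↔ q e) :
    b0 (fun e : {e // p e} => s e.1) (fun e => t e.1)
      = b0 (fun e : {e // q e} => s e.1) (fun e => t e.1) := by
  have : GraphStep (fun e : {e // p e} => s e.1) (fun e => t e.1)
      = GraphStep (fun e : {e // q e} => s e.1) (fun e => t e.1) := by
    funext a b
    refine propext ⟨?_, ?_⟩
    · rintro ⟨⟨e, he⟩, h1, h2⟩; exact ⟨⟨e, (h e).mp he⟩, h1, h2⟩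
    · rintro ⟨⟨e, he⟩, h1, h2⟩; exact ⟨⟨e, (h e).mpr he⟩, h1, h2⟩
  unfold b0; rw [this]

end Generic3

section SuppProd
variable {M N : Type*} [AddCommGroup M] [AddCommGroup N]
  [Module ℝ M] [Module ℝ N]

def prodSubEquiv (p : Submodule ℝ M) (q : Submodule ℝ N) : (p.prod q) ≃ₗ[ℝ] p × q where
  toFun x := (⟨x.1.1, x.2.1⟩, ⟨x.1.2, x.2.2⟩)
  invFun y := ⟨(y.1.1, y.2.1), ⟨y.1.2, y.2.2⟩⟩
  map_add' x y := rfl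
  map_smul' c x := rfl
  left_inv x := rfl
  right_inv y := rfl

lemma finrank_prod_sub (p : Submodule ℝ M) (q : Submodule ℝ N)
    [FiniteDimensional ℝ p] [FiniteDimensional ℝ q] :
    Module.finrank ℝ (p.prod q) = Module.finrank ℝ p + Module.finrank ℝ q := by
  rw [(prodSubEquiv p q).finrank_eq, Module.finrank_prod]

end SuppProd

section Supp
variable {E : Type} [Fintype E]

def suppSub (p : E → Prop) : Submodule ℝ (E → ℝ) where
  carrier := {u | ∀ e, ¬ p e → u e = 0}
  add_mem' := by intro a b ha hb e he; simp [ha e he, hb e he]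
  zero_mem' := by intro e he; rfl
  smul_mem' := by intro c a ha e he; simp [ha e he]

lemma mem_suppSub {p : E → Prop} {u : E → ℝ} : u ∈ suppSub p ↔ ∀ e, ¬ p e → u e = 0 :=
  Iff.rfl

lemma finrank_suppSub (p : E → Prop) :
    Module.finrank ℝ (suppSub p) = Nat.card {e // p e} := by
  set Φ : suppSub p →ₗ[ℝ] ({e // p e} → ℝ) :=
    (LinearMap.funLeft ℝ ℝ (Subtype.val)).comp (suppSub p).subtype with hΦ
  have hbij : Function.Bijective Φ := by
    constructor
    · intro u1 u2 h
      ext e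
      by_cases he : p e
      · exact congrFun h ⟨e, he⟩
      · rw [u1.2 e he, u2.2 e he]
    · intro w
      refine ⟨⟨fun e => if h : p e then w ⟨e, h⟩ else 0, fun e he => dif_neg he⟩, ?_⟩
      funext x
      show (if h : p x.1 then w ⟨x.1, h⟩ else 0) = w x
      rw [dif_pos x.2]
  rw [(LinearEquiv.ofBijective Φ hbij).finrank_eq, Module.finrank_pi,
    Nat.card_eq_fintype_card]

end Supp

section Main
variable {V E : Type} [Fintype V] [Fintype E] [DecidableEq E] (s t : E → V) (𝓔 : Finset E)
  (φ : SubE 𝓔 → ℕ)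

/-- The flow on ordinary (non-subdivided) edges, extended by `0`. -/
def phiE : E → ℕ := fun e => if h : e ∈ 𝓔 then 0 else φ (.inl ⟨e, h⟩)

lemma phiE_ne_zero_iff (e : E) :
    phiE 𝓔 φ e ≠ 0 ↔ ∃ h : e ∉ 𝓔, φ (.inl ⟨e, h⟩) ≠ 0 := by
  unfold phiE
  by_cases h : e ∈ 𝓔 <;> simp [h]

lemma phiE_spec {e : E} (he : e ∉ 𝓔) : phiE 𝓔 φ e = φ (.inl ⟨e, he⟩) := dif_neg he

/-- The target subspace `Y`. -/
def Ysub : Submodule ℝ (E → ℝ) where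
  carrier := {y | ∃ h : V → ℝ, ∀ (e : E) (he : e ∉ 𝓔),
    (φ (.inl ⟨e, he⟩) : ℝ) * y e = h (t e) - h (s e)}
  add_mem' := by
    rintro y1 y2 ⟨h1, hh1⟩ ⟨h2, hh2⟩
    exact ⟨h1 + h2, fun e he => by simp [mul_add, hh1 e he, hh2 e he]; ring⟩
  zero_mem' := ⟨0, fun e he => by simp⟩
  smul_mem' := by
    rintro c y ⟨h, hh⟩
    refine ⟨c • h, fun e he => ?_⟩
    rw [Pi.smul_apply, Pi.smul_apply, Pi.smul_apply, smul_eq_mul, smul_eq_mul, smul_eq_mul,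
      mul_left_comm, hh e he]
    ring

lemma mem_Ysub {y : E → ℝ} : y ∈ Ysub s t 𝓔 φ ↔ ∃ h : V → ℝ, ∀ (e : E) (he : e ∉ 𝓔),
    (φ (.inl ⟨e, he⟩) : ℝ) * y e = h (t e) - h (s e) := Iff.rfl

lemma phi_true_eq (hdiv : ∀ w : {e // e ∈ 𝓔}, divFlow (subS s t 𝓔) (subT s t 𝓔) φ
    (Sum.inr w) = -1) (w : {e // e ∈ 𝓔}) :
    φ (.inr (w, true)) = φ (.inr (w, false)) + 1 := by
  have h1 : {a : SubE 𝓔 | subT s t 𝓔 a = .inr w} = {Sum.inr (w, false)} := by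
    ext a
    rcases a with e | ⟨w', b⟩
    · simp [subT]
    · cases b <;> simp [subT, Prod.ext_iff]
  have h2 : {a : SubE 𝓔 | subS s t 𝓔 a = .inr w} = {Sum.inr (w, true)} := by
    ext a
    rcases a with e | ⟨w', b⟩
    · simp [subS]
    · cases b <;> simp [subS, Prod.ext_iff]
  have := hdiv w
  unfold divFlow at this
  rw [h1, h2, finsum_mem_singleton, finsum_mem_singleton] at this
  omega

/-- `Fmap` as a linear map. -/
def FLin : (SubE 𝓔 → ℝ) →ₗ[ℝ] (E → ℝ) where
  toFun := Fmap 𝓔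
  map_add' x y := by
    funext e; by_cases h : e ∈ 𝓔 <;> simp [Fmap, h] <;> ring
  map_smul' c x := by
    funext e; by_cases h : e ∈ 𝓔 <;> simp [Fmap, h] <;> ring

end Main

section Span
variable {V E : Type} [Fintype V] [Fintype E] [DecidableEq E] (s t : E → V) (𝓔 : Finset E)
  (φ : SubE 𝓔 → ℕ)

lemma Fmap_eq_FLin (u : SubE 𝓔 → ℝ) : Fmap 𝓔 u = FLin 𝓔 u := rfl

lemma Kcone_subset_Ysub : Kcone s t 𝓔 φ ⊆ (Ysub s t 𝓔 φ : Set (E → ℝ)) := by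
  rintro y ⟨x, hx, rfl⟩
  obtain ⟨-, f, hf⟩ := (mem_ccone_iff _ _ _ _).mp hx
  refine ⟨f ∘ Sum.inl, fun e he => ?_⟩
  have h1 : Fmap 𝓔 x e = x (.inl ⟨e, he⟩) := dif_neg he
  rw [h1]
  exact hf (.inl ⟨e, he⟩)

lemma span_Kcone_eq (hac : FlowAcyclic (subS s t 𝓔) (subT s t 𝓔) φ)
    (hdiv : ∀ w : {e // e ∈ 𝓔}, divFlow (subS s t 𝓔) (subT s t 𝓔) φ (Sum.inr w) = -1) :
    Submodule.span ℝ (Kcone s t 𝓔 φ) = Ysub s t 𝓔 φ := by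
  apply le_antisymm
  · rw [Submodule.span_le]; exact Kcone_subset_Ysub s t 𝓔 φ
  · intro y hy
    obtain ⟨h, hh⟩ := hy
    obtain ⟨fb, hfb1, hfb2⟩ := exists_potential _ _ φ hac
    set xb : SubE 𝓔 → ℝ := fun a => if hz : φ a = 0 then 1
      else (fb (subT s t 𝓔 a) - fb (subS s t 𝓔 a)) / (φ a : ℝ) with hxbdef
    have hxbpos : ∀ a, 0 < xb a := by
      intro a
      simp only [hxbdef]
      by_cases hz : φ a = 0
      · simp [hz]
      · rw [dif_neg hz]
        exact div_pos (sub_pos.mpr (hfb1 a hz)) (by exact_mod_cast Nat.pos_of_ne_zero hz)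
    have hxbf : ∀ a, (φ a : ℝ) * xb a = fb (subT s t 𝓔 a) - fb (subS s t 𝓔 a) := by
      intro a
      simp only [hxbdef]
      by_cases hz : φ a = 0
      · rw [dif_pos hz, hz, (hfb2 a hz)]; simp
      · rw [dif_neg hz, mul_div_cancel₀]
        exact_mod_cast hz
    have hxbC : xb ∈ Ccone (subS s t 𝓔) (subT s t 𝓔) φ :=
      (mem_ccone_iff _ _ _ _).mpr ⟨fun a => (hxbpos a).le, fb, hxbf⟩
    have hφ10 : ∀ w : {e // e ∈ 𝓔}, (φ (.inr (w, true)) : ℝ) = (φ (.inr (w, false)) : ℝ) + 1 :=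
      fun w => by exact_mod_cast phi_true_eq s t 𝓔 φ hdiv w
    have hφ1pos : ∀ w : {e // e ∈ 𝓔}, (0:ℝ) < (φ (.inr (w, true)) : ℝ) := fun w => by
      rw [hφ10 w]; positivity
    set g : {e // e ∈ 𝓔} → ℝ := fun w => if (φ (.inr (w, false)) : ℝ) = 0 then h (s w.1)
      else (φ (.inr (w, true)) : ℝ) * h (s w.1)
        + (φ (.inr (w, false)) : ℝ) * (φ (.inr (w, true)) : ℝ) * y w.1
        - (φ (.inr (w, false)) : ℝ) * h (t w.1) with hg
    set x : SubE 𝓔 → ℝ := fun a => match a with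
      | .inl e => y e.1
      | .inr (w, true) => (h (t w.1) - g w) / (φ (.inr (w, true)) : ℝ)
      | .inr (w, false) => y w.1 - (h (t w.1) - g w) / (φ (.inr (w, true)) : ℝ)
      with hxdef
    set f : SubV V 𝓔 → ℝ := Sum.elim h g with hfdef
    have hxf : ∀ a, (φ a : ℝ) * x a = f (subT s t 𝓔 a) - f (subS s t 𝓔 a) := by
      rintro (e | ⟨w, b⟩)
      · exact hh e.1 e.2
      · cases b
        · show (φ (.inr (w, false)) : ℝ)
              * (y w.1 - (h (t w.1) - g w) / (φ (.inr (w, true)) : ℝ))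
            = g w - h (s w.1)
          by_cases hz : (φ (.inr (w, false)) : ℝ) = 0
          · rw [hg]; simp only [if_pos hz, hz]; simp
          · rw [hg]; simp only [if_neg hz]
            rw [hφ10 w]
            have h1 : (φ (.inr (w, false)) : ℝ) + 1 ≠ 0 := by positivity
            field_simp
            ring
        · show (φ (.inr (w, true)) : ℝ)
              * ((h (t w.1) - g w) / (φ (.inr (w, true)) : ℝ)) = h (t w.1) - g w
          exact mul_div_cancel₀ _ (hφ1pos w).ne'
    have hFx : Fmap 𝓔 x = y := by
      funext e
      by_cases hme : e ∈ 𝓔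
      · show (if h' : e ∈ 𝓔 then x (Sum.inr (⟨e, h'⟩, false)) + x (Sum.inr (⟨e, h'⟩, true))
            else x (Sum.inl ⟨e, h'⟩)) = y e
        rw [dif_pos hme]
        show (y e - (h (t e) - g ⟨e, hme⟩) / (φ (.inr (⟨e, hme⟩, true)) : ℝ))
            + (h (t e) - g ⟨e, hme⟩) / (φ (.inr (⟨e, hme⟩, true)) : ℝ) = y e
        ring
      · exact dif_neg hme
    set lam : ℝ := ∑ a, |x a| / xb a with hlam
    have hterm : ∀ a, |x a| / xb a ≤ lam := fun a =>
      Finset.single_le_sum (f := fun b => |x b| / xb b) (fun b _ => div_nonneg (abs_nonneg _) (hxbpos b).le)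
        (Finset.mem_univ a)
    have hnn : ∀ a, 0 ≤ x a + lam * xb a := by
      intro a
      have h2 : |x a| / xb a * xb a ≤ lam * xb a :=
        mul_le_mul_of_nonneg_right (hterm a) (hxbpos a).le
      rw [div_mul_cancel₀ _ (hxbpos a).ne'] at h2
      have h3 := neg_abs_le (x a)
      linarith
    have hmem : (x + lam • xb) ∈ Ccone (subS s t 𝓔) (subT s t 𝓔) φ := by
      refine (mem_ccone_iff _ _ _ _).mpr ⟨fun a => by simpa using hnn a, f + lam • fb, fun a => ?_⟩
      simp only [Pi.add_apply, Pi.smul_apply, smul_eq_mul]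
      rw [mul_add, hxf a, mul_left_comm, hxbf a]
      ring
    have hK1 : Fmap 𝓔 (x + lam • xb) ∈ Kcone s t 𝓔 φ := ⟨_, hmem, rfl⟩
    have hK2 : Fmap 𝓔 xb ∈ Kcone s t 𝓔 φ := ⟨_, hxbC, rfl⟩
    have hdecomp : y = Fmap 𝓔 (x + lam • xb) - lam • Fmap 𝓔 xb := by
      rw [← hFx, Fmap_eq_FLin, Fmap_eq_FLin, Fmap_eq_FLin, map_add, map_smul]
      simp
    rw [hdecomp]
    exact Submodule.sub_mem _ (Submodule.subset_span hK1)
      (Submodule.smul_mem _ _ (Submodule.subset_span hK2))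

end Span

section Dim
variable {V E : Type} [Fintype V] [Fintype E] [DecidableEq E] (s t : E → V) (𝓔 : Finset E)
  (φ : SubE 𝓔 → ℕ)

lemma phiE_ne0_not_mem {e : E} (h : phiE 𝓔 φ e ≠ 0) : e ∉ 𝓔 := by
  intro hc; rw [phiE, dif_pos hc] at h; exact h rfl

lemma pZ_iff (e : E) :
    (e ∉ 𝓔 ∧ ∀ h : e ∉ 𝓔, φ (Sum.inl ⟨e, h⟩) = 0) ↔ (e ∉ 𝓔 ∧ phiE 𝓔 φ e = 0) := by
  unfold phiE
  by_cases h : e ∈ 𝓔 <;> simp [h]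

def Gmap : ((V → ℝ) × (E → ℝ)) →ₗ[ℝ] (E → ℝ) where
  toFun p e := if phiE 𝓔 φ e ≠ 0 then (p.1 (t e) - p.1 (s e)) / (phiE 𝓔 φ e : ℝ) else p.2 e
  map_add' p q := by
    funext e
    simp only [Prod.fst_add, Prod.snd_add, Pi.add_apply]
    split_ifs with h
    · ring
    · rfl
  map_smul' c p := by
    funext e
    simp only [Prod.smul_fst, Prod.smul_snd, Pi.smul_apply, smul_eq_mul, RingHom.id_apply]
    split_ifs with h
    · ring
    · rfl

lemma Gmap_apply (p : (V → ℝ) × (E → ℝ)) (e : E) :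
    Gmap s t 𝓔 φ p e = if phiE 𝓔 φ e ≠ 0 then (p.1 (t e) - p.1 (s e)) / (phiE 𝓔 φ e : ℝ)
      else p.2 e := rfl

lemma finrank_Ysub
    (hnd : GraphConnected (fun e : {e // e ∉ 𝓔} => s e.1) (fun e : {e // e ∉ 𝓔} => t e.1)) :
    Module.finrank ℝ (Ysub s t 𝓔 φ)
      + (1 + Nat.card {e : E // ∃ h : e ∉ 𝓔, φ (Sum.inl ⟨e, h⟩) ≠ 0})
      = Nat.card E
        + b0 (fun e : {e : E // e ∉ 𝓔 ∧ ∀ h : e ∉ 𝓔, φ (Sum.inl ⟨e, h⟩) = 0} => s e.1)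
            (fun e => t e.1) := by
  set W0 := constSub (fun e : {e : E // e ∉ 𝓔 ∧ ∀ h : e ∉ 𝓔, φ (Sum.inl ⟨e, h⟩) = 0} => s e.1)
    (fun e => t e.1) with hW0
  set M := W0.prod (⊤ : Submodule ℝ (E → ℝ)) with hM
  set W1 := constSub (fun e : {e // e ∉ 𝓔} => s e.1) (fun e : {e // e ∉ 𝓔} => t e.1) with hW1
  set U := suppSub (fun e => phiE 𝓔 φ e ≠ 0) with hU
  set K := W1.prod U with hK
  have hKM : K ≤ M := by
    rintro ⟨h, u⟩ hk
    rw [hK, Submodule.mem_prod] at hk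
    rw [hM, Submodule.mem_prod]
    exact ⟨fun e => hk.1 ⟨e.1, e.2.1⟩, trivial⟩
  have hmap : Ysub s t 𝓔 φ = Submodule.map (Gmap s t 𝓔 φ) M := by
    ext y
    constructor
    · rintro ⟨h, hh⟩
      refine ⟨(h, y), ?_, ?_⟩
      · rw [SetLike.mem_coe, hM, Submodule.mem_prod]
        refine ⟨fun e => ?_, trivial⟩
        have he := e.2
        have h0 := hh e.1 he.1
        rw [he.2 he.1] at h0
        push_cast at h0
        linarith [h0]
      · funext e
        rw [Gmap_apply]
        by_cases hz : phiE 𝓔 φ e ≠ 0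
        · rw [if_pos hz]
          have he : e ∉ 𝓔 := phiE_ne0_not_mem 𝓔 φ hz
          have h0 := hh e he
          rw [← phiE_spec 𝓔 φ he] at h0
          rw [div_eq_iff (by exact_mod_cast hz), ← h0]
          ring
        · rw [if_neg hz]
    · rintro ⟨⟨h, u⟩, hm, rfl⟩
      rw [SetLike.mem_coe, hM, Submodule.mem_prod] at hm
      refine ⟨h, fun e he => ?_⟩
      rw [← phiE_spec 𝓔 φ he, Gmap_apply]
      by_cases hz : phiE 𝓔 φ e ≠ 0
      · rw [if_pos hz, mul_div_cancel₀ _ (by exact_mod_cast hz : (phiE 𝓔 φ e : ℝ) ≠ 0)]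
      · rw [if_neg hz]
        have h1 : h (s e) = h (t e) := hm.1 ⟨e, (pZ_iff 𝓔 φ e).mpr ⟨he, not_not.mp hz⟩⟩
        rw [not_not.mp hz, h1]
        simp
  have h1 := LinearMap.finrank_range_add_finrank_ker ((Gmap s t 𝓔 φ).domRestrict M)
  rw [LinearMap.range_domRestrict] at h1
  have hker : LinearMap.ker ((Gmap s t 𝓔 φ).domRestrict M) = Submodule.comap M.subtype K := by
    ext x
    obtain ⟨⟨h, u⟩, hm⟩ := x
    rw [hM, Submodule.mem_prod] at hm
    simp only [LinearMap.mem_ker, LinearMap.domRestrict_apply, Submodule.mem_comap,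
      Submodule.subtype_apply, hK, Submodule.mem_prod]
    constructor
    · intro h0
      constructor
      · intro e
        by_cases hz : phiE 𝓔 φ e.1 ≠ 0
        · have := congrFun h0 e.1
          rw [Gmap_apply, if_pos hz] at this
          have h2 : h (t e.1) - h (s e.1) = 0 := by
            field_simp at this
            simp only [Pi.zero_apply, mul_zero] at this
            linarith [this]
          linarith [h2]
        · exact hm.1 ⟨e.1, (pZ_iff 𝓔 φ e.1).mpr ⟨e.2, not_not.mp hz⟩⟩
      · intro e hz
        have h9 := congrFun h0 e
        rw [Gmap_apply, if_neg hz] at h9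
        exact h9
    · rintro ⟨h1', h2'⟩
      funext e
      rw [Gmap_apply]
      by_cases hz : phiE 𝓔 φ e ≠ 0
      · have hst : h (s e) = h (t e) := h1' ⟨e, phiE_ne0_not_mem 𝓔 φ hz⟩
        rw [if_pos hz]
        show (h (t e) - h (s e)) / ((phiE 𝓔 φ e : ℝ)) = (0 : E → ℝ) e
        rw [hst]
        simp
      · rw [if_neg hz]
        exact h2' e hz
  rw [hker] at h1
  have h2 : Module.finrank ℝ (Submodule.comap M.subtype K) = Module.finrank ℝ K :=
    (Submodule.comapSubtypeEquivOfLe hKM).finrank_eq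
  have h3 : Module.finrank ℝ M = Module.finrank ℝ W0 + Nat.card E := by
    rw [hM, finrank_prod_sub, finrank_top, Module.finrank_pi, Nat.card_eq_fintype_card]
  have h4 : Module.finrank ℝ K = 1 + Nat.card {e : E // ∃ h : e ∉ 𝓔, φ (Sum.inl ⟨e, h⟩) ≠ 0} := by
    rw [hK, finrank_prod_sub, hW1, finrank_constSub, hU, finrank_suppSub]
    have hb : Nat.card (Quot (GraphStep (fun e : {e // e ∉ 𝓔} => s e.1)
        (fun e : {e // e ∉ 𝓔} => t e.1))) = 1 := hnd.2
    rw [hb]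
    congr 1
    exact Nat.card_congr (Equiv.subtypeEquivRight fun e => phiE_ne_zero_iff 𝓔 φ e)
  have h5 : Module.finrank ℝ W0 = b0
      (fun e : {e : E // e ∉ 𝓔 ∧ ∀ h : e ∉ 𝓔, φ (Sum.inl ⟨e, h⟩) = 0} => s e.1)
      (fun e => t e.1) := by
    rw [hW0, finrank_constSub]; rfl
  rw [← hmap, h2, h4, h3, h5] at h1
  omega

end Dim

section Helpers2

lemma b0_isEmpty {V E : Type} [IsEmpty E] (s t : E → V) : b0 s t = Nat.card V :=
  b0_eq_card_of_isEmpty s t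

lemma b0_pos {V E : Type} [Finite V] [Nonempty V] (s t : E → V) : 1 ≤ b0 s t := by
  haveI : Finite (Quot (GraphStep s t)) := Finite.of_surjective _ Quot.mk_surjective
  haveI : Nonempty (Quot (GraphStep s t)) := Nonempty.map (Quot.mk _) ‹_›
  exact Nat.card_pos

lemma two_elt {V : Type} (h2 : Nat.card V = 2) {a b c d : V} (hab : a ≠ b) (hcd : c ≠ d) :
    (a = c ∧ b = d) ∨ (a = d ∧ b = c) := by
  obtain ⟨x, y, hxy, huniv⟩ := Nat.card_eq_two_iff.mp h2
  have hmem : ∀ v : V, v = x ∨ v = y := by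
    intro v
    have hv : v ∈ ({x, y} : Set V) := huniv ▸ Set.mem_univ v
    simpa using hv
  rcases hmem a with ha | ha
  · have hb : b = y := (hmem b).resolve_left (fun h => hab (ha.trans h.symm))
    rcases hmem c with hc | hc
    · have hd : d = y := (hmem d).resolve_left (fun h => hcd (hc.trans h.symm))
      exact Or.inl ⟨ha.trans hc.symm, hb.trans hd.symm⟩
    · have hd : d = x := (hmem d).resolve_right (fun h => hcd (hc.trans h.symm))
      exact Or.inr ⟨ha.trans hd.symm, hb.trans hc.symm⟩
  · have hb : b = x := (hmem b).resolve_right (fun h => hab (ha.trans h.symm))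
    rcases hmem c with hc | hc
    · have hd : d = y := (hmem d).resolve_left (fun h => hcd (hc.trans h.symm))
      exact Or.inr ⟨ha.trans hd.symm, hb.trans hc.symm⟩
    · have hd : d = x := (hmem d).resolve_right (fun h => hcd (hc.trans h.symm))
      exact Or.inl ⟨ha.trans hc.symm, hb.trans hd.symm⟩

lemma single_edge_b0 {V E : Type} (s t : E → V) (p : E → Prop) (e0 : E)
    (hp : ∀ e, p e ↔ e = e0)
    (hq : b0 (fun e : {e // p e} => s e.1) (fun e => t e.1) = 1) :
    Subsingleton V ∨ (Nat.card V = 2 ∧ s e0 ≠ t e0 ∧ ∀ v : V, v = s e0 ∨ v = t e0) := by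
  set r := GraphStep (fun e : {e // p e} => s e.1) (fun e : {e // p e} => t e.1) with hr
  have hrel : ∀ a b, r a b → a = s e0 ∧ b = t e0 := by
    rintro a b ⟨⟨e, he⟩, h1, h2⟩
    rw [hp e] at he
    subst he
    exact ⟨h1.symm, h2.symm⟩
  haveI hsq : Subsingleton (Quot r) := (Nat.card_eq_one_iff_unique.mp hq).1
  have key : ∀ u v : V, Relation.EqvGen r u v →
      u = v ∨ ((u = s e0 ∨ u = t e0) ∧ (v = s e0 ∨ v = t e0)) := by
    intro u v h
    induction h with
    | rel a b hab => obtain ⟨h1, h2⟩ := hrel a b hab; exact Or.inr ⟨Or.inl h1, Or.inr h2⟩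
    | refl a => exact Or.inl rfl
    | symm a b _ ih => tauto
    | trans a b c _ _ ih1 ih2 =>
        rcases ih1 with rfl | h1
        · exact ih2
        · rcases ih2 with rfl | h2
          · exact Or.inr h1
          · exact Or.inr ⟨h1.1, h2.2⟩
  have hall : ∀ u v : V, u = v ∨ ((u = s e0 ∨ u = t e0) ∧ (v = s e0 ∨ v = t e0)) :=
    fun u v => key u v (Quot.eqvGen_exact (Subsingleton.elim _ _))
  by_cases hss : ∀ u v : V, u = v
  · exact Or.inl ⟨hss⟩
  · push_neg at hss
    obtain ⟨u, v, huv⟩ := hss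
    have hPall : ∀ w : V, w = s e0 ∨ w = t e0 := by
      intro w
      by_cases hwu : w = u
      · subst hwu
        rcases hall w v with rfl | h
        · exact absurd rfl huv
        · exact h.1
      · rcases hall w u with rfl | h
        · exact absurd rfl hwu
        · exact h.1
    have hst : s e0 ≠ t e0 := by
      intro hcon
      apply huv
      rcases hPall u with h1 | h1 <;> rcases hPall v with h2 | h2 <;>
        simp [h1, h2, hcon]
    refine Or.inr ⟨?_, hst, hPall⟩
    rw [Nat.card_eq_two_iff]
    refine ⟨s e0, t e0, hst, Set.eq_univ_iff_forall.mpr fun w => ?_⟩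
    rcases hPall w with h | h <;> simp [h]

lemma card_split {E : Type} [Fintype E] (p : E → Prop) :
    Nat.card {e // p e} + Nat.card {e // ¬ p e} = Nat.card E := by
  haveI := Classical.decPred p
  rw [← Nat.card_sum]
  exact Nat.card_congr (Equiv.sumCompl p)

lemma forall_of_card_zero {E : Type} [Fintype E] {p : E → Prop}
    (h : Nat.card {e // ¬ p e} = 0) : ∀ e, p e := by
  have h2 : IsEmpty {e // ¬ p e} := by
    rcases Nat.card_eq_zero.mp h with h3 | h3
    · exact h3
    · exact absurd h3 (not_infinite_iff_finite.mpr inferInstance)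
  intro e
  by_contra hc
  exact h2.false ⟨e, hc⟩

lemma unique_of_card_one {E : Type} {p : E → Prop}
    (h : Nat.card {e // p e} = 1) : ∃ e0, p e0 ∧ ∀ e, p e → e = e0 := by
  obtain ⟨hsub, hne⟩ := Nat.card_eq_one_iff_unique.mp h
  obtain ⟨x⟩ := hne
  exact ⟨x.1, x.2, fun e he => congrArg Subtype.val (hsub.elim ⟨e, he⟩ x)⟩

end Helpers2

section Helpers3
variable {V E : Type} [Fintype V] [Fintype E] [DecidableEq E] (s t : E → V) (𝓔 : Finset E)
  (φ : SubE 𝓔 → ℕ)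

lemma loop_kill (hac : FlowAcyclic (subS s t 𝓔) (subT s t 𝓔) φ)
    {e : E} (he : e ∉ 𝓔) (hne : φ (.inl ⟨e, he⟩) ≠ 0) : s e ≠ t e := by
  intro hst
  refine hac ⟨.inl ⟨e, he⟩, hne, ?_⟩
  have h1 : subT s t 𝓔 (Sum.inl ⟨e, he⟩) = subS s t 𝓔 (Sum.inl ⟨e, he⟩) := by
    show Sum.inl (t e) = Sum.inl (s e)
    rw [hst]
  rw [h1]

lemma no_loop_mem (hac : FlowAcyclic (subS s t 𝓔) (subT s t 𝓔) φ)
    (hdiv : ∀ w : {e // e ∈ 𝓔}, divFlow (subS s t 𝓔) (subT s t 𝓔) φ (Sum.inr w) = -1)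
    (w : {e // e ∈ 𝓔}) : s w.1 ≠ t w.1 := by
  intro hst
  refine hac ⟨.inr (w, true), ?_, ?_⟩
  · rw [phi_true_eq s t 𝓔 φ hdiv w]; simp
  · refine Relation.ReflTransGen.single ?_
    by_cases hz : φ (.inr (w, false)) = 0
    · refine Or.inr ⟨.inr (w, false), hz, Or.inl ⟨?_, rfl⟩⟩
      show Sum.inl (s w.1) = Sum.inl (t w.1)
      rw [hst]
    · refine Or.inl ⟨.inr (w, false), hz, ?_, rfl⟩
      show Sum.inl (s w.1) = Sum.inl (t w.1)
      rw [hst]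

lemma no_parallel (hac : FlowAcyclic (subS s t 𝓔) (subT s t 𝓔) φ) {a b : SubE 𝓔}
    (ha : φ a ≠ 0) (hb : φ b = 0)
    (h : (subS s t 𝓔 b = subT s t 𝓔 a ∧ subT s t 𝓔 b = subS s t 𝓔 a) ∨
         (subS s t 𝓔 b = subS s t 𝓔 a ∧ subT s t 𝓔 b = subT s t 𝓔 a)) : False :=
  hac ⟨a, ha, Relation.ReflTransGen.single (Or.inr ⟨b, hb, by tauto⟩)⟩

end Helpers3

/-- Proposition 5.1 (Prop. `prop:Kdim`): the dimension formula for `K_{Γ,𝓔,φ}` and the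
characterization of the cases of dimension `0` and `1`. Here
`𝓕 = {e ∈ E∖𝓔 : φ(e) ≠ 0}` and `Γ_{𝓔∪𝓕}` is the graph `(V, E∖(𝓔∪𝓕))`. -/
theorem Kcone_dim (V E : Type) [Fintype V] [Fintype E] [DecidableEq E] (s t : E → V)
    (hconn : GraphConnected s t) (𝓔 : Finset E)
    (hnd : GraphConnected (fun e : {e // e ∉ 𝓔} => s e.1) (fun e : {e // e ∉ 𝓔} => t e.1))
    (φ : SubE 𝓔 → ℕ)
    (hac : FlowAcyclic (subS s t 𝓔) (subT s t 𝓔) φ)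
    (hdiv : ∀ w : {e // e ∈ 𝓔}, divFlow (subS s t 𝓔) (subT s t 𝓔) φ (Sum.inr w) = -1) :
    ((Module.finrank ℝ (Submodule.span ℝ (Kcone s t 𝓔 φ)) : ℤ)
        = (Nat.card E : ℤ)
          - (Nat.card {e : E // ∃ h : e ∉ 𝓔, φ (Sum.inl ⟨e, h⟩) ≠ 0} : ℤ)
          + (b0 (fun e : {e : E // e ∉ 𝓔 ∧ ∀ h : e ∉ 𝓔, φ (Sum.inl ⟨e, h⟩) = 0} => s e.1)
                (fun e => t e.1) : ℤ) - 1) ∧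
    (Module.finrank ℝ (Submodule.span ℝ (Kcone s t 𝓔 φ)) = 0 ↔
      Nat.card V = 1 ∧ IsEmpty E) ∧
    (Module.finrank ℝ (Submodule.span ℝ (Kcone s t 𝓔 φ)) = 1 ↔
      𝓔 = ∅ ∧
        ((Nat.card V = 2 ∧ (∀ e, s e ≠ t e) ∧ ∃ a, φ a ≠ 0) ∨
         (Nat.card V = 2 ∧ (∀ e, s e ≠ t e) ∧ Nat.card E = 1 ∧ ∀ a, φ a = 0) ∨
         (Nat.card V = 1 ∧ Nat.card E = 1))) := by
  classical
  have hVne : Nonempty V := hconn.1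
  have hspan := span_Kcone_eq s t 𝓔 φ hac hdiv
  rw [hspan]
  have hkey := finrank_Ysub s t 𝓔 φ hnd
  have hm := card_split (fun e : E => ∃ h : e ∉ 𝓔, φ (Sum.inl ⟨e, h⟩) ≠ 0)
  set n := Module.finrank ℝ ↥(Ysub s t 𝓔 φ) with hn
  set cF := Nat.card {e : E // ∃ h : e ∉ 𝓔, φ (Sum.inl ⟨e, h⟩) ≠ 0} with hcF
  set q := b0 (fun e : {e : E // e ∉ 𝓔 ∧ ∀ h : e ∉ 𝓔, φ (Sum.inl ⟨e, h⟩) = 0} => s e.1)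
      (fun e => t e.1) with hqdef
  set m := Nat.card {e : E // ¬ ∃ h : e ∉ 𝓔, φ (Sum.inl ⟨e, h⟩) ≠ 0} with hmdef
  have hq1 : 1 ≤ q := by rw [hqdef]; exact b0_pos _ _
  have hloopkill : ∀ (e : E) (he : e ∉ 𝓔), φ (.inl ⟨e, he⟩) ≠ 0 → s e ≠ t e :=
    fun e he hne => loop_kill s t 𝓔 φ hac he hne
  have hFall : (∀ e : E, ∃ h : e ∉ 𝓔, φ (Sum.inl ⟨e, h⟩) ≠ 0) →
      (q = Nat.card V ∧ 𝓔 = ∅ ∧ ∀ e, s e ≠ t e) := by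
    intro hall
    haveI hZempty : IsEmpty {e : E // e ∉ 𝓔 ∧ ∀ h : e ∉ 𝓔, φ (Sum.inl ⟨e, h⟩) = 0} := by
      refine ⟨fun x => ?_⟩
      obtain ⟨he, hz⟩ := x.2
      obtain ⟨he', hne⟩ := hall x.1
      exact hne (hz he')
    refine ⟨by rw [hqdef]; exact b0_isEmpty _ _, ?_, ?_⟩
    · refine Finset.eq_empty_iff_forall_notMem.mpr fun e hme => ?_
      obtain ⟨he, _⟩ := hall e
      exact he hme
    · intro e
      obtain ⟨he, hne⟩ := hall e
      exact hloopkill e he hne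
  refine ⟨by omega, ?_, ?_⟩
  · constructor
    · intro h0
      have hm0 : m = 0 := by omega
      have hall := forall_of_card_zero (p := fun e : E => ∃ h : e ∉ 𝓔, φ (Sum.inl ⟨e, h⟩) ≠ 0)
        hm0
      obtain ⟨hqV, hE0, hlp⟩ := hFall hall
      have hV1 : Nat.card V = 1 := by omega
      haveI hsub : Subsingleton V := (Nat.card_eq_one_iff_unique.mp hV1).1
      exact ⟨hV1, ⟨fun e => hlp e (Subsingleton.elim _ _)⟩⟩
    · rintro ⟨hV1, hEemp⟩
      haveI := hEemp
      have hcF0 : cF = 0 := by rw [hcF]; exact Nat.card_of_isEmpty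
      have hE0 : Nat.card E = 0 := Nat.card_of_isEmpty
      have hq' : q = Nat.card V := by
        haveI : IsEmpty {e : E // e ∉ 𝓔 ∧ ∀ h : e ∉ 𝓔, φ (Sum.inl ⟨e, h⟩) = 0} :=
          ⟨fun x => hEemp.false x.1⟩
        rw [hqdef]; exact b0_isEmpty _ _
      omega
  · constructor
    · intro h1
      rcases (by omega : (m = 0 ∧ q = 2) ∨ (m = 1 ∧ q = 1)) with ⟨hm0, hq2⟩ | ⟨hm1, hq1'⟩
      · have hall := forall_of_card_zero (p := fun e : E => ∃ h : e ∉ 𝓔, φ (Sum.inl ⟨e, h⟩) ≠ 0)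
          hm0
        obtain ⟨hqV, hE0, hlp⟩ := hFall hall
        have hV2 : Nat.card V = 2 := by omega
        have hEne : Nonempty E := by
          by_contra hc
          haveI hcE : IsEmpty E := not_nonempty_iff.mp hc
          haveI : IsEmpty {e : E // e ∉ 𝓔} := ⟨fun x => hcE.false x.1⟩
          have h2 := hnd.2
          rw [b0_isEmpty] at h2
          omega
        obtain ⟨e⟩ := hEne
        obtain ⟨he, hne⟩ := hall e
        exact ⟨hE0, Or.inl ⟨hV2, hlp, ⟨.inl ⟨e, he⟩, hne⟩⟩⟩
      · obtain ⟨e0, he0P, he0uniq⟩ :=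
          unique_of_card_one (p := fun e : E => ¬ ∃ h : e ∉ 𝓔, φ (Sum.inl ⟨e, h⟩) ≠ 0) hm1
        by_cases he0m : e0 ∈ 𝓔
        · exfalso
          haveI : IsEmpty {e : E // e ∉ 𝓔 ∧ ∀ h : e ∉ 𝓔, φ (Sum.inl ⟨e, h⟩) = 0} := by
            refine ⟨fun x => ?_⟩
            obtain ⟨he, hz⟩ := x.2
            have hnF : ¬ ∃ h : x.1 ∉ 𝓔, φ (Sum.inl ⟨x.1, h⟩) ≠ 0 := by
              rintro ⟨h', hne⟩; exact hne (hz h')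
            exact he ((he0uniq x.1 hnF) ▸ he0m)
          have hqV : q = Nat.card V := by rw [hqdef]; exact b0_isEmpty _ _
          have hV1 : Nat.card V = 1 := by omega
          haveI hsub : Subsingleton V := (Nat.card_eq_one_iff_unique.mp hV1).1
          exact no_loop_mem s t 𝓔 φ hac hdiv ⟨e0, he0m⟩ (Subsingleton.elim _ _)
        · have hφ0 : φ (Sum.inl ⟨e0, he0m⟩) = 0 := by
            by_contra hc
            exact he0P ⟨he0m, hc⟩
          have hE0 : 𝓔 = ∅ := by
            refine Finset.eq_empty_iff_forall_notMem.mpr fun e hme => ?_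
            have hnF : ¬ ∃ h : e ∉ 𝓔, φ (Sum.inl ⟨e, h⟩) ≠ 0 := by
              rintro ⟨h', _⟩; exact h' hme
            exact he0m ((he0uniq e hnF) ▸ hme)
          have hpZ : ∀ e : E, (e ∉ 𝓔 ∧ ∀ h : e ∉ 𝓔, φ (Sum.inl ⟨e, h⟩) = 0) ↔ e = e0 := by
            intro e
            constructor
            · rintro ⟨he, hz⟩
              exact he0uniq e (by rintro ⟨h', hne⟩; exact hne (hz h'))
            · rintro rfl
              exact ⟨he0m, fun h => hφ0⟩
          have hb1 : b0 (fun e : {e : E // e ∉ 𝓔 ∧ ∀ h : e ∉ 𝓔, φ (Sum.inl ⟨e, h⟩) = 0} =>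
              s e.1) (fun e => t e.1) = 1 := by rw [← hqdef]; exact hq1'
          rcases single_edge_b0 s t _ e0 hpZ hb1 with hss | ⟨hV2, hst, hPall⟩
          · have hV1 : Nat.card V = 1 := Nat.card_eq_one_iff_unique.mpr ⟨hss, hVne⟩
            have hallE : ∀ e : E, e = e0 := by
              intro e
              by_cases hF : ∃ h : e ∉ 𝓔, φ (Sum.inl ⟨e, h⟩) ≠ 0
              · obtain ⟨he, hne⟩ := hF
                haveI := hss
                exact absurd (Subsingleton.elim (s e) (t e)) (hloopkill e he hne)
              · exact he0uniq e hF
            have hE1 : Nat.card E = 1 := Nat.card_eq_one_iff_unique.mpr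
              ⟨⟨fun a b => (hallE a).trans (hallE b).symm⟩, ⟨e0⟩⟩
            exact ⟨hE0, Or.inr (Or.inr ⟨hV1, hE1⟩)⟩
          · have hallE : ∀ e : E, e = e0 := by
              intro e
              refine he0uniq e ?_
              rintro ⟨he, hne⟩
              have hse := hloopkill e he hne
              refine no_parallel s t 𝓔 φ hac hne hφ0 ?_
              rcases hPall (s e) with h1 | h1 <;> rcases hPall (t e) with h2 | h2
              · exact absurd (h1.trans h2.symm) hse
              · refine Or.inr ⟨?_, ?_⟩
                · show Sum.inl (s e0) = Sum.inl (s e)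
                  rw [h1]
                · show Sum.inl (t e0) = Sum.inl (t e)
                  rw [h2]
              · refine Or.inl ⟨?_, ?_⟩
                · show Sum.inl (s e0) = Sum.inl (t e)
                  rw [h2]
                · show Sum.inl (t e0) = Sum.inl (s e)
                  rw [h1]
              · exact absurd (h1.trans h2.symm) hse
            have hE1 : Nat.card E = 1 := Nat.card_eq_one_iff_unique.mpr
              ⟨⟨fun a b => (hallE a).trans (hallE b).symm⟩, ⟨e0⟩⟩
            refine ⟨hE0, Or.inr (Or.inl ⟨hV2, ?_, hE1, ?_⟩)⟩
            · intro e; rw [hallE e]; exact hst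
            · rintro (⟨e, he⟩ | ⟨w, bb⟩)
              · have he' : e = e0 := hallE e
                subst he'
                exact hφ0
              · exact absurd w.2 (fun hme => Finset.notMem_empty w.1 (hE0 ▸ hme))
    · rintro ⟨hE0, hcase⟩
      have hnotin : ∀ e : E, e ∉ 𝓔 := fun e hme => Finset.notMem_empty e (hE0 ▸ hme)
      rcases hcase with ⟨hV2, hlp, a0, ha0⟩ | ⟨hV2, hlp, hE1, hzero⟩ | ⟨hV1, hE1⟩
      · rcases a0 with ⟨e1, he1⟩ | ⟨w, bb⟩
        · have hall : ∀ e : E, ∃ h : e ∉ 𝓔, φ (Sum.inl ⟨e, h⟩) ≠ 0 := by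
            intro e
            refine ⟨hnotin e, ?_⟩
            by_contra hz
            have hpair := two_elt hV2 (hlp e1) (hlp e)
            refine no_parallel s t 𝓔 φ hac ha0 hz ?_
            rcases hpair with ⟨h1, h2⟩ | ⟨h1, h2⟩
            · refine Or.inr ⟨?_, ?_⟩
              · show Sum.inl (s e) = Sum.inl (s e1)
                rw [← h1]
              · show Sum.inl (t e) = Sum.inl (t e1)
                rw [← h2]
            · refine Or.inl ⟨?_, ?_⟩
              · show Sum.inl (s e) = Sum.inl (t e1)
                rw [← h2]
              · show Sum.inl (t e) = Sum.inl (s e1)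
                rw [← h1]
          obtain ⟨hqV, -, -⟩ := hFall hall
          have hcFE : cF = Nat.card E := by
            rw [hcF]; exact Nat.card_congr (Equiv.subtypeUnivEquiv hall)
          omega
        · exact absurd w.2 (hnotin w.1)
      · have hcF0 : cF = 0 := by
          rw [hcF]
          haveI : IsEmpty {e : E // ∃ h : e ∉ 𝓔, φ (Sum.inl ⟨e, h⟩) ≠ 0} := by
            refine ⟨fun x => ?_⟩
            obtain ⟨h', hne⟩ := x.2
            exact hne (hzero _)
          exact Nat.card_of_isEmpty
        have hqq : q = 1 := by
          rw [hqdef, b0_congr (p := fun e : E => e ∉ 𝓔 ∧ ∀ h : e ∉ 𝓔, φ (Sum.inl ⟨e, h⟩) = 0)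
            (q := fun e : E => e ∉ 𝓔) s t
            (fun e => ⟨fun h => h.1, fun h => ⟨h, fun _ => hzero _⟩⟩)]
          exact hnd.2
        omega
      · haveI hsubV : Subsingleton V := (Nat.card_eq_one_iff_unique.mp hV1).1
        have hzero' : ∀ (e : E) (h : e ∉ 𝓔), φ (Sum.inl ⟨e, h⟩) = 0 := by
          intro e h
          by_contra hc
          exact hloopkill e h hc (Subsingleton.elim _ _)
        have hcF0 : cF = 0 := by
          rw [hcF]
          haveI : IsEmpty {e : E // ∃ h : e ∉ 𝓔, φ (Sum.inl ⟨e, h⟩) ≠ 0} := by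
            refine ⟨fun x => ?_⟩
            obtain ⟨h', hne⟩ := x.2
            exact hne (hzero' _ _)
          exact Nat.card_of_isEmpty
        have hqq : q = 1 := by
          rw [hqdef, b0_congr (p := fun e : E => e ∉ 𝓔 ∧ ∀ h : e ∉ 𝓔, φ (Sum.inl ⟨e, h⟩) = 0)
            (q := fun e : E => e ∉ 𝓔) s t
            (fun e => ⟨fun h => h.1, fun h => ⟨h, hzero' e⟩⟩)]
          exact hnd.2
        omega

end
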